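/- Every measurable solution of the α-deformed fundamental equation is proportional to the binary Tsallis entropy: for α > 0, α ≠ 1, if u : [0,1] → ℝ is measurable, u(0) = u(1) = 0, and u(1−x) + (1−x)^α·u(y/(1−x)) = u(y) + (1−y)^α·u((1−x−y)/(1−y)) for all admissible x, y, then there is λ ∈ ℝ with u(p) = λ·(p^α + (1−p)^α − 1)/(1−α). -/

import Mathlib

open MeasureTheory Pointwise

/-- A measurable additive function `ℝ → ℝ` is linear. -/
lemma fet_cauchy_linear (g : ℝ → ℝ) (hadd : ∀ x y, g (x + y) = g x + g y)
    (hm : Measurable g) : ∀ x, g x = g 1 * x := by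
  set h : ℝ →+ ℝ := AddMonoidHom.mk' (fun x => g x - g 1 * x)
    (by intro a b; simp only [hadd]; ring) with hh
  have hmeas : Measurable h := by
    have : Measurable fun x : ℝ => g x - g 1 * x := hm.sub (measurable_const.mul measurable_id)
    exact this
  have h1 : h 1 = 0 := by simp [hh, AddMonoidHom.mk'_apply]
  have hQ : ∀ q : ℚ, h (q : ℝ) = 0 := by
    intro q
    have := map_ratCast_smul h ℚ ℚ q (1 : ℝ)
    simpa [h1] using this
  have hshift : ∀ (x : ℝ) (q : ℚ), h (x - q) = h x := by
    intro x q; rw [map_sub, hQ, sub_zero]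
  obtain ⟨M, hM⟩ : ∃ M : ℕ, 0 < volume {x : ℝ | |h x| ≤ M} := by
    by_contra hc
    push_neg at hc
    simp only [le_zero_iff] at hc
    have hun : (⋃ n : ℕ, {x : ℝ | |h x| ≤ n}) = Set.univ := by
      ext x; simp only [Set.mem_iUnion, Set.mem_setOf_eq, Set.mem_univ, iff_true]
      exact exists_nat_ge |h x|
    have h0 : volume (⋃ n : ℕ, {x : ℝ | |h x| ≤ n}) = 0 :=
      measure_iUnion_null fun n => hc n
    rw [hun] at h0
    simp [Real.volume_univ] at h0
  have hAmeas : MeasurableSet {x : ℝ | |h x| ≤ M} :=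
    measurableSet_le hmeas.abs measurable_const
  have hsub : {x : ℝ | |h x| ≤ M} - {x : ℝ | |h x| ≤ M} ∈ nhds (0:ℝ) :=
    MeasureTheory.Measure.sub_mem_nhds_zero_of_addHaar_pos volume _ hAmeas hM
  obtain ⟨δ, hδ, hball⟩ := Metric.mem_nhds_iff.mp hsub
  have hbd : ∀ x : ℝ, |h x| ≤ 2 * M := by
    intro x
    obtain ⟨q, hq⟩ := exists_rat_near x hδ
    have hmem : x - (q:ℝ) ∈ Metric.ball (0:ℝ) δ := by
      simpa [Real.dist_eq] using hq
    obtain ⟨a, ha, b, hb, hab⟩ := hball hmem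
    have hd : h (x - q) = h a - h b := by rw [← hab, map_sub]
    rw [hshift] at hd
    rw [hd]
    calc |h a - h b| ≤ |h a| + |h b| := abs_sub _ _
      _ ≤ M + M := add_le_add ha hb
      _ = 2 * M := by ring
  intro x
  have hzero : h x = 0 := by
    by_contra hne
    obtain ⟨n, hn⟩ := exists_nat_gt (2 * M / |h x|)
    have hpos : 0 < |h x| := abs_pos.mpr hne
    have hnx : h (n • x) = n • h x := map_nsmul h n x
    have hb2 : |h (n • x)| ≤ 2 * M := hbd _
    rw [hnx, nsmul_eq_mul, abs_mul, Nat.abs_cast] at hb2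
    rw [div_lt_iff₀ hpos] at hn
    linarith
  have : g x - g 1 * x = 0 := by
    simpa [hh, AddMonoidHom.mk'_apply] using hzero
  linarith

/-- A measurable function `ℝ → ℝ` that is additive on positive reals is linear there. -/
lemma fet_pos_additive_linear (f : ℝ → ℝ) (hm : Measurable f)
    (hadd : ∀ a b : ℝ, 0 < a → 0 < b → f (a + b) = f a + f b) :
    ∀ q : ℝ, 0 < q → f q = q * f 1 := by
  set g : ℝ → ℝ := fun z => if 0 < z then f z else if z < 0 then -f (-z) else 0 with hg
  have hgpos : ∀ z : ℝ, 0 < z → g z = f z := by intro z hz; simp [hg, if_pos hz]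
  have hgneg : ∀ z : ℝ, z < 0 → g z = -f (-z) := by
    intro z hz; simp [hg, not_lt.mpr hz.le, hz]
  have hg0 : g 0 = 0 := by simp [hg]
  have hgm : Measurable g := by
    apply Measurable.ite (measurableSet_lt measurable_const measurable_id) hm
    apply Measurable.ite (measurableSet_lt measurable_id measurable_const)
    · exact (hm.comp measurable_neg).neg
    · exact measurable_const
  have hgadd : ∀ x y : ℝ, g (x + y) = g x + g y := by
    intro x y
    rcases lt_trichotomy x 0 with hx | hx | hx
    · rcases lt_trichotomy y 0 with hy | hy | hy
      · have hs : x + y < 0 := by linarith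
        have := hadd (-x) (-y) (by linarith) (by linarith)
        rw [hgneg _ hs, hgneg _ hx, hgneg _ hy,
          show -(x+y) = -x + -y by ring, this]; ring
      · subst hy; simp [hg0]
      · rcases lt_trichotomy (x + y) 0 with hs | hs | hs
        · have := hadd (-(x+y)) y (by linarith) hy
          rw [show -(x+y) + y = -x by ring] at this
          rw [hgneg _ hs, hgneg _ hx, hgpos _ hy]; linarith
        · have hyx : y = -x := by linarith
          rw [hs, hg0, hgneg _ hx, hgpos _ hy, hyx]; ring
        · have := hadd (x+y) (-x) hs (by linarith)
          rw [show x + y + -x = y by ring] at this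
          rw [hgpos _ hs, hgneg _ hx, hgpos _ hy]; linarith
    · subst hx; simp [hg0]
    · rcases lt_trichotomy y 0 with hy | hy | hy
      · rcases lt_trichotomy (x + y) 0 with hs | hs | hs
        · have := hadd (-(x+y)) x (by linarith) hx
          rw [show -(x+y) + x = -y by ring] at this
          rw [hgneg _ hs, hgpos _ hx, hgneg _ hy]; linarith
        · have hyx : y = -x := by linarith
          rw [hs, hg0, hgpos _ hx, hgneg _ hy, hyx]; ring
        · have := hadd (x+y) (-y) hs (by linarith)
          rw [show x + y + -y = x by ring] at this
          rw [hgpos _ hs, hgpos _ hx, hgneg _ hy]; linarith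
      · subst hy; simp [hg0]
      · have hs : 0 < x + y := by linarith
        rw [hgpos _ hs, hgpos _ hx, hgpos _ hy]; exact hadd x y hx hy
  have hlin := fet_cauchy_linear g hgadd hgm
  intro q hq
  have h1 : g 1 = f 1 := hgpos 1 one_pos
  have hq' := hlin q
  rw [hgpos _ hq, h1] at hq'
  rw [hq']; ring

/-- Every measurable solution of the α-deformed fundamental equation of information
theory is a multiple of the binary Tsallis entropy `s_α(p) = (p^α + (1−p)^α − 1)/(1−α)`. -/
theorem fundamental_equation_tsallis
    (α : ℝ) (hα : 0 < α) (hα1 : α ≠ 1)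
    (u : ℝ → ℝ) (hu : Measurable u)
    (h0 : u 0 = 0) (h1 : u 1 = 0)
    (heq : ∀ x y : ℝ, 0 ≤ x → x < 1 → 0 ≤ y → y < 1 → x + y ≤ 1 →
      u (1 - x) + (1 - x) ^ α * u (y / (1 - x))
        = u y + (1 - y) ^ α * u ((1 - x - y) / (1 - y))) :
    ∃ lam : ℝ, ∀ p : ℝ, 0 ≤ p → p ≤ 1 →
      u p = lam * ((p ^ α + (1 - p) ^ α - 1) / (1 - α)) := by
  -- `2^α ≠ 2` since `α ≠ 1`
  have h2α : (2:ℝ) ^ α ≠ 2 := by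
    intro h
    apply hα1
    have h2 : (2:ℝ) ^ α = (2:ℝ) ^ (1:ℝ) := by rw [Real.rpow_one]; exact h
    rcases lt_trichotomy α 1 with hlt | he | hgt
    · have := (Real.rpow_lt_rpow_left_iff (by norm_num : (1:ℝ) < 2)).2 hlt
      rw [h2, Real.rpow_one] at this; linarith [this]
    · exact he
    · have := (Real.rpow_lt_rpow_left_iff (by norm_num : (1:ℝ) < 2)).2 hgt
      rw [h2, Real.rpow_one] at this; linarith [this]
  have h2αne : (2:ℝ) - 2 ^ α ≠ 0 := by
    intro h; apply h2α; linarith [sub_eq_zero.mp h]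
  set c : ℝ := 2 ^ α * u (1/2) / (2 - 2 ^ α) with hc
  have hcc : (2:ℝ) ^ α * u (1/2) = c * (2 - 2 ^ α) := by
    rw [hc]; field_simp
  set F : ℝ → ℝ → ℝ :=
    fun p q => (p + q) ^ α * u (p / (p + q)) - c * (p ^ α + q ^ α - (p + q) ^ α) with hF
  -- the cocycle identity
  have hC : ∀ p q r : ℝ, 0 < p → 0 < q → 0 < r →
      F p q + F (p + q) r = F q r + F p (q + r) := by
    intro p q r hp hq hr
    have hT : 0 < p + q + r := by linarith
    have hTne : p + q + r ≠ 0 := ne_of_gt hT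
    have key := heq (r / (p+q+r)) (p / (p+q+r)) (by positivity)
      ((div_lt_one hT).2 (by linarith)) (by positivity)
      ((div_lt_one hT).2 (by linarith))
      (by rw [← add_div, div_le_one hT]; linarith)
    have e1 : 1 - r / (p+q+r) = (p+q) / (p+q+r) := by field_simp; ring
    rw [e1] at key
    have e2 : p / (p+q+r) / ((p+q) / (p+q+r)) = p / (p+q) := by
      rw [div_div_div_cancel_right₀]; exact hTne
    have e3 : 1 - p / (p+q+r) = (q+r) / (p+q+r) := by field_simp; ring
    rw [e3] at key
    have e4 : ((p+q) / (p+q+r) - p / (p+q+r)) / ((q+r) / (p+q+r)) = q / (q+r) := by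
      rw [div_sub_div_same, show p + q - p = q by ring, div_div_div_cancel_right₀]
      exact hTne
    rw [e2, e4] at key
    have hd1 : ((p+q) / (p+q+r)) ^ α = (p+q)^α / (p+q+r)^α :=
      Real.div_rpow (by positivity) (le_of_lt hT) α
    have hd2 : ((q+r) / (p+q+r)) ^ α = (q+r)^α / (p+q+r)^α :=
      Real.div_rpow (by positivity) (le_of_lt hT) α
    rw [hd1, hd2] at key
    have hTα : (0:ℝ) < (p+q+r)^α := Real.rpow_pos_of_pos hT α
    field_simp at key
    simp only [hF]
    rw [show p + (q + r) = p + q + r by ring]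
    linear_combination key
  -- vanishing on the diagonal
  have hdiag : ∀ x : ℝ, 0 < x → F x x = 0 := by
    intro x hx
    simp only [hF]
    rw [show x + x = 2 * x by ring]
    rw [show x / (2 * x) = 1/2 by field_simp]
    rw [Real.mul_rpow (by norm_num) (le_of_lt hx)]
    linear_combination x ^ α * hcc
  -- degree-α homogeneity under doubling
  have hhom : ∀ p q : ℝ, 0 < p → 0 < q → F (2*p) (2*q) = 2 ^ α * F p q := by
    intro p q hp hq
    simp only [hF]
    rw [show 2*p + 2*q = 2*(p+q) by ring]
    rw [Real.mul_rpow (by norm_num) (by positivity : (0:ℝ) ≤ p + q)]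
    rw [Real.mul_rpow (by norm_num) (le_of_lt hp)]
    rw [Real.mul_rpow (by norm_num) (le_of_lt hq)]
    rw [show 2*p / (2*(p+q)) = p / (p+q) by
      rw [mul_div_mul_left]; norm_num]
    ring
  -- antisymmetry
  have hanti : ∀ x y : ℝ, 0 < x → 0 < y → F x y + F y x = 0 := by
    intro x y hx hy
    have i1 := hC x y (x+y) hx hy (by linarith)
    rw [hdiag (x+y) (by linarith), show y + (x+y) = x + 2*y by ring] at i1
    have i2 := hC (x+y) y x (by linarith) hy hx
    rw [show x + y + y = x + 2*y by ring, show y + x = x + y by ring,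
      hdiag (x+y) (by linarith)] at i2
    have i3 := hC x y y hx hy hy
    rw [hdiag y hy, show y + y = 2*y by ring] at i3
    have i4 := hC x x (2*y) hx hx (by linarith)
    rw [hdiag x hx, show x + x = 2*x by ring, hhom x y hx hy,
      show x + 2*y = x + 2*y by ring] at i4
    have i5 := hC y y x hy hy hx
    rw [hdiag y hy, show y + y = 2*y by ring, show y + x = x + y by ring] at i5
    have i6 := hC (2*y) x x (by linarith) hx hx
    rw [hdiag x hx, show 2*y + x = x + 2*y by ring, show x + x = 2*x by ring,
      hhom y x hy hx] at i6
    have key : ((2:ℝ) ^ α - 2) * (F x y + F y x) = 0 := by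
      linear_combination i4 - i3 - i1 + i5 - i6 + i2
    rcases mul_eq_zero.mp key with h | h
    · exfalso; apply h2α; linarith [sub_eq_zero.mp h]
    · exact h
  -- additivity in the second variable
  have hB : ∀ a b d : ℝ, 0 < a → 0 < b → 0 < d →
      F a (b+d) - F a b - F a d = -(F d (a+b) - F d a - F d b) := by
    intro a b d ha hb hd
    have h1' := hC a b d ha hb hd
    have h2' := hanti (a+b) d (by linarith) hd
    have h3' := hanti a d ha hd
    have h4' := hanti b d hb hd
    linarith
  have hadd : ∀ a b d : ℝ, 0 < a → 0 < b → 0 < d → F a (b+d) = F a b + F a d := by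
    intro a b d ha hb hd
    have e1 := hB a b d ha hb hd
    have e2 := hB d a b hd ha hb
    have e3 := hB b d a hb hd ha
    linarith
  -- linearity in the second variable, via measurability
  have hlin : ∀ p : ℝ, 0 < p → ∀ q : ℝ, 0 < q → F p q = q * F p 1 := by
    intro p hp
    have hmf : Measurable (fun q => F p q) := by
      have hrc : Measurable (fun x : ℝ => x ^ α) :=
        (Real.continuous_rpow_const hα.le).measurable
      simp only [hF]
      apply Measurable.sub
      · apply Measurable.mul
        · exact hrc.comp (measurable_const.add measurable_id)
        · exact hu.comp (measurable_const.div (measurable_const.add measurable_id))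
      · apply Measurable.mul measurable_const
        apply Measurable.sub
        · exact measurable_const.add (hrc.comp measurable_id)
        · exact hrc.comp (measurable_const.add measurable_id)
    exact fet_pos_additive_linear (fun q => F p q) hmf (fun a b ha hb => hadd p a b hp ha hb)
  -- everything vanishes
  have hzero : ∀ p q : ℝ, 0 < p → 0 < q → F p q = 0 := by
    intro p q hp hq
    have h11 : F 1 1 = 0 := hdiag 1 one_pos
    have h1p : F 1 p = 0 := by rw [hlin 1 one_pos p hp, h11, mul_zero]
    have hp1 : F p 1 = 0 := by
      have := hanti 1 p one_pos hp; linarith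
    rw [hlin p hp q hq, hp1, mul_zero]
  -- conclusion
  have h1α : (1:ℝ) - α ≠ 0 := sub_ne_zero.mpr (fun h => hα1 h.symm)
  refine ⟨c * (1 - α), ?_⟩
  intro p hp0 hp1'
  rcases eq_or_lt_of_le hp0 with hp0' | hp0'
  · rw [← hp0']
    rw [Real.zero_rpow (ne_of_gt hα), sub_zero, Real.one_rpow]
    simp [h0]
  rcases eq_or_lt_of_le hp1' with hp1'' | hp1''
  · rw [hp1'']
    rw [Real.one_rpow, sub_self, Real.zero_rpow (ne_of_gt hα)]
    simp [h1]
  have hF0 := hzero p (1-p) hp0' (by linarith)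
  simp only [hF] at hF0
  rw [show p + (1 - p) = (1:ℝ) by ring, Real.one_rpow, div_one] at hF0
  have hgoal : c * (1 - α) * ((p ^ α + (1 - p) ^ α - 1) / (1 - α))
      = c * (p ^ α + (1 - p) ^ α - 1) := by
    field_simp
  rw [hgoal]
  linarith
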